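/- Positivity of the split propagator increment: let M = M_x + M_y with M_x, M_y Metzler and M invertible with ‖M^{-1}‖_∞ ≤ C, and let Φ(τ) = e^{(τ/2)M_x} e^{τ M_y} e^{(τ/2)M_x} with ‖e^{tM_x}‖_∞ ≤ 1 and ‖e^{tM_y}‖_∞ ≤ 1 for t ≥ 0. Then M^{-1}(Φ(τ) − I) = ∫₀^τ E₁(s)E₂(s)E₁(s) ds + R(τ), where E₁(s) = e^{(s/2)M_x}, E₂(s) = e^{sM_y}, the integral term is entrywise nonnegative, and ‖R(τ)‖_∞ ≤ (C τ²/2)‖[M_x, M_y]‖_∞. -/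

import Mathlib

open NormedSpace

attribute [local instance] Matrix.linftyOpNormedAddCommGroup Matrix.linftyOpNormedRing
  Matrix.linftyOpNormedAlgebra

namespace Stmt19Aux

variable {n : ℕ}

noncomputable def entryCLM (i j : Fin n) : Matrix (Fin n) (Fin n) ℝ →L[ℝ] ℝ :=
  LinearMap.toContinuousLinearMap
    { toFun := fun X => X i j
      map_add' := fun _ _ => rfl
      map_smul' := fun _ _ => rfl }

@[simp] lemma entryCLM_apply (i j : Fin n) (X : Matrix (Fin n) (Fin n) ℝ) :
    entryCLM i j X = X i j := rfl

lemma pow_entry_nonneg {N : Matrix (Fin n) (Fin n) ℝ} (hN : ∀ i j, 0 ≤ N i j) :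
    ∀ (k : ℕ) (i j), 0 ≤ (N ^ k) i j := by
  intro k
  induction k with
  | zero =>
    intro i j
    by_cases h : i = j <;> simp [Matrix.one_apply, h]
  | succ k ih =>
    intro i j
    rw [pow_succ, Matrix.mul_apply]
    exact Finset.sum_nonneg fun l _ => mul_nonneg (ih i l) (hN l j)

lemma exp_entry_nonneg {N : Matrix (Fin n) (Fin n) ℝ} (hN : ∀ i j, 0 ≤ N i j)
    (i j : Fin n) : 0 ≤ exp N i j := by
  have h := (entryCLM i j).map_tsum (expSeries_summable' (𝕂 := ℝ) N)
  have he : exp N i j = entryCLM i j (∑' k, (k.factorial⁻¹ : ℝ) • N ^ k) := by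
    rw [exp_eq_tsum (𝕂 := ℝ)]; rfl
  rw [he, h]
  refine tsum_nonneg fun k => ?_
  simp only [map_smul, entryCLM_apply, smul_eq_mul]
  exact mul_nonneg (by positivity) (pow_entry_nonneg hN k i j)

lemma exp_metzler_nonneg {A : Matrix (Fin n) (Fin n) ℝ} (hA : ∀ i j, i ≠ j → 0 ≤ A i j)
    {t : ℝ} (ht : 0 ≤ t) (i j : Fin n) : 0 ≤ exp (t • A) i j := by
  set B := t • A with hBdef
  have hB : ∀ i j, i ≠ j → 0 ≤ B i j := by
    intro i j hij
    have : B i j = t * A i j := rfl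
    rw [this]
    exact mul_nonneg ht (hA i j hij)
  set c : ℝ := ∑ k, |B k k| with hcdef
  have hc : ∀ i, |B i i| ≤ c :=
    fun i => Finset.single_le_sum (f := fun k => |B k k|) (fun k _ => abs_nonneg _)
      (Finset.mem_univ i)
  set N : Matrix (Fin n) (Fin n) ℝ := B + c • (1 : Matrix (Fin n) (Fin n) ℝ) with hNdef
  have hN : ∀ i j, 0 ≤ N i j := by
    intro i j
    by_cases h : i = j
    · subst h
      have : N i i = B i i + c := by simp [hNdef, Matrix.one_apply]
      rw [this]
      have := (abs_le.mp (hc i)).1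
      linarith
    · have : N i j = B i j := by simp [hNdef, Matrix.one_apply, h]
      rw [this]
      exact hB i j h
  have hsplit : B = N + (-c) • (1 : Matrix (Fin n) (Fin n) ℝ) := by
    rw [hNdef, add_assoc, ← add_smul, add_neg_cancel, zero_smul, add_zero]
  have hcomm : Commute N ((-c) • (1 : Matrix (Fin n) (Fin n) ℝ)) :=
    ((Commute.one_right N).smul_right (-c))
  have hexp1 : exp ((-c) • (1 : Matrix (Fin n) (Fin n) ℝ))
      = Real.exp (-c) • (1 : Matrix (Fin n) (Fin n) ℝ) := by
    rw [← Matrix.diagonal_one, ← Matrix.diagonal_smul, ← Matrix.diagonal_smul, Matrix.exp_diagonal]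
    congr 1; ext i; simp [Real.exp_eq_exp_ℝ]
  have : exp B = Real.exp (-c) • exp N := by
    rw [hsplit, Matrix.exp_add_of_commute _ _ hcomm, hexp1, mul_smul_comm, mul_one]
  rw [this, Matrix.smul_apply, smul_eq_mul]
  exact mul_nonneg (Real.exp_nonneg _) (exp_entry_nonneg hN i j)

lemma cont_exp_smul (A : Matrix (Fin n) (Fin n) ℝ) :
    Continuous fun s : ℝ => exp (s • A) :=
  exp_continuous.comp (continuous_id.smul continuous_const)

lemma comm_bound {A : Matrix (Fin n) (Fin n) ℝ}
    (hc : ∀ u : ℝ, 0 ≤ u → ‖exp (u • A)‖ ≤ 1) (B : Matrix (Fin n) (Fin n) ℝ)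
    {t : ℝ} (ht : 0 ≤ t) :
    ‖exp (t • A) * B - B * exp (t • A)‖ ≤ t * ‖A * B - B * A‖ := by
  set g : ℝ → Matrix (Fin n) (Fin n) ℝ :=
    fun u => exp ((t - u) • A) * (B * exp (u • A)) with hgdef
  set D : ℝ → Matrix (Fin n) (Fin n) ℝ :=
    fun u => exp ((t - u) • A) * ((B * A - A * B) * exp (u • A)) with hDdef
  have hderiv : ∀ u ∈ Set.uIcc (0:ℝ) t, HasDerivAt g (D u) u := by
    intro u _
    have h1 : HasDerivAt (fun u : ℝ => exp ((t - u) • A))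
        ((-1 : ℝ) • (exp ((t - u) • A) * A)) u := by
      have := HasDerivAt.scomp (h := fun u : ℝ => t - u) (x := u)
        (hasDerivAt_exp_smul_const A (t - u)) ((hasDerivAt_id u).const_sub t)
      simp only [Function.comp, neg_smul, one_smul] at this ⊢
      exact this
    have h2 : HasDerivAt (fun u : ℝ => B * exp (u • A))
        (B * (exp (u • A) * A)) u := (hasDerivAt_exp_smul_const A u).const_mul B
    have h3 := h1.mul h2
    have comm : exp (u • A) * A = A * exp (u • A) :=
      (((Commute.refl A).smul_right u).exp_right).eq.symm
    refine h3.congr_deriv ?_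
    rw [hDdef]
    simp only [comm, neg_one_smul]
    noncomm_ring
  have hcont : Continuous D := by
    refine (Continuous.comp (cont_exp_smul A) (continuous_const.sub continuous_id)).mul
      (continuous_const.mul ((cont_exp_smul A)))
  have hint := hcont.intervalIntegrable (μ := MeasureTheory.volume) 0 t
  have key : (∫ u in (0:ℝ)..t, D u) = g t - g 0 :=
    intervalIntegral.integral_eq_sub_of_hasDerivAt hderiv hint
  have hgt : g t = B * exp (t • A) := by
    simp [hgdef, sub_self, exp_zero]
  have hg0 : g 0 = exp (t • A) * B := by
    simp [hgdef, exp_zero]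
  have hnorm : ‖∫ u in (0:ℝ)..t, D u‖ ≤ ‖B * A - A * B‖ * |t - 0| := by
    refine intervalIntegral.norm_integral_le_of_norm_le_const ?_
    intro u hu
    rw [Set.uIoc_of_le ht] at hu
    have hu0 : (0:ℝ) ≤ u := le_of_lt hu.1
    have hut : (0:ℝ) ≤ t - u := by linarith [hu.2]
    calc ‖D u‖ ≤ ‖exp ((t - u) • A)‖ * ‖(B * A - A * B) * exp (u • A)‖ := norm_mul_le _ _
      _ ≤ 1 * (‖B * A - A * B‖ * 1) := by
          refine mul_le_mul (hc _ hut) ?_ (norm_nonneg _) zero_le_one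
          calc ‖(B * A - A * B) * exp (u • A)‖
              ≤ ‖B * A - A * B‖ * ‖exp (u • A)‖ := norm_mul_le _ _
            _ ≤ ‖B * A - A * B‖ * 1 :=
                mul_le_mul_of_nonneg_left (hc _ hu0) (norm_nonneg _)
      _ = ‖B * A - A * B‖ := by ring
  have : exp (t • A) * B - B * exp (t • A) = -(∫ u in (0:ℝ)..t, D u) := by
    rw [key, hgt, hg0]; abel
  rw [this, norm_neg]
  calc ‖∫ u in (0:ℝ)..t, D u‖ ≤ ‖B * A - A * B‖ * |t - 0| := hnorm
    _ = t * ‖A * B - B * A‖ := by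
        rw [norm_sub_rev, sub_zero, abs_of_nonneg ht, mul_comm]

end Stmt19Aux

open Stmt19Aux MeasureTheory intervalIntegral

/-- Positivity of the split propagator increment: with `M = M_x + M_y` Metzler, the splitting
`Φ(τ) = e^{(τ/2)M_x} e^{τM_y} e^{(τ/2)M_x}` satisfies
`M⁻¹(Φ(τ) − I) = ∫₀^τ E₁(s)E₂(s)E₁(s) ds + R(τ)` where the integral term is entrywise
nonnegative and `‖R(τ)‖_∞ ≤ (C τ²/2)‖[M_x,M_y]‖_∞`; consequently, if `[M_x,M_y] = 0` then
`M⁻¹(Φ(τ) − I)` is entrywise nonnegative for all `τ ≥ 0`. -/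
theorem stmt_19 {n : ℕ} (Mx My : Matrix (Fin n) (Fin n) ℝ)
    (hMx : ∀ i j, i ≠ j → 0 ≤ Mx i j) (hMy : ∀ i j, i ≠ j → 0 ≤ My i j)
    (M : Matrix (Fin n) (Fin n) ℝ) (hM : M = Mx + My) (hMunit : IsUnit M.det)
    (C : ℝ) (hC : ‖M⁻¹‖ ≤ C)
    (hcx : ∀ t : ℝ, 0 ≤ t → ‖exp (t • Mx)‖ ≤ 1)
    (hcy : ∀ t : ℝ, 0 ≤ t → ‖exp (t • My)‖ ≤ 1)
    (E₁ E₂ : ℝ → Matrix (Fin n) (Fin n) ℝ)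
    (hE₁ : ∀ s, E₁ s = exp ((s / 2) • Mx)) (hE₂ : ∀ s, E₂ s = exp (s • My))
    (Φ : ℝ → Matrix (Fin n) (Fin n) ℝ)
    (hΦ : ∀ τ, Φ τ = exp ((τ / 2) • Mx) * exp (τ • My) * exp ((τ / 2) • Mx)) :
    (∃ R : ℝ → Matrix (Fin n) (Fin n) ℝ, ∀ τ : ℝ, 0 ≤ τ →
      M⁻¹ * (Φ τ - 1) = (∫ s in (0 : ℝ)..τ, E₁ s * E₂ s * E₁ s) + R τ ∧
      (∀ i j, 0 ≤ (∫ s in (0 : ℝ)..τ, E₁ s * E₂ s * E₁ s) i j) ∧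
      ‖R τ‖ ≤ C * τ ^ 2 / 2 * ‖Mx * My - My * Mx‖) ∧
    (Mx * My - My * Mx = 0 → ∀ τ : ℝ, 0 ≤ τ → ∀ i j, 0 ≤ (M⁻¹ * (Φ τ - 1)) i j) := by
  have hC0 : 0 ≤ C := le_trans (norm_nonneg _) hC
  set P : ℝ → Matrix (Fin n) (Fin n) ℝ := fun s => exp ((s / 2) • Mx) with hPdef
  set Q : ℝ → Matrix (Fin n) (Fin n) ℝ := fun s => exp (s • My) with hQdef
  set F : ℝ → Matrix (Fin n) (Fin n) ℝ := fun s => P s * Q s * P s with hFdef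
  have hE₁' : E₁ = P := funext hE₁
  have hE₂' : E₂ = Q := funext hE₂
  have hΦ' : Φ = fun τ => P τ * Q τ * P τ := funext hΦ
  subst hE₁' hE₂' hΦ' hM
  set M : Matrix (Fin n) (Fin n) ℝ := Mx + My with hMdef
  -- continuity
  have hPcont : Continuous P :=
    exp_continuous.comp ((continuous_id.div_const 2).smul continuous_const)
  have hQcont : Continuous Q := cont_exp_smul My
  have hFcont : Continuous F := (hPcont.mul hQcont).mul hPcont
  -- commutation of Mx with P s
  have hpx : ∀ s : ℝ, Mx * P s = P s * Mx :=
    fun s => (((Commute.refl Mx).smul_right ((s : ℝ) / 2)).exp_right).eq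
  have e1 : ∀ (s : ℝ) (X : Matrix (Fin n) (Fin n) ℝ),
      Mx * (P s * X) = P s * (Mx * X) := fun s X => by
    rw [← mul_assoc, hpx s, mul_assoc]
  -- the error term
  set Err : ℝ → Matrix (Fin n) (Fin n) ℝ := fun s =>
    ((1:ℝ)/2) • (F s * Mx - Mx * F s) + (P s * My - My * P s) * (Q s * P s) with hErrdef
  have hErrcont : Continuous Err := by
    refine Continuous.add (Continuous.fun_const_smul ?_ _) ?_
    · exact (hFcont.mul continuous_const).sub (continuous_const.mul hFcont)
    · exact ((hPcont.mul continuous_const).sub (continuous_const.mul hPcont)).mul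
        (hQcont.mul hPcont)
  -- derivative of Φ
  have hD : ∀ s : ℝ, HasDerivAt (fun τ => P τ * Q τ * P τ) (M * F s + Err s) s := by
    intro s
    have hP : HasDerivAt P (((1:ℝ)/2) • (P s * Mx)) s := by
      have := HasDerivAt.scomp (h := fun u : ℝ => u / 2) (x := s)
        (hasDerivAt_exp_smul_const Mx (s / 2)) ((hasDerivAt_id s).div_const 2)
      exact this
    have hQ : HasDerivAt Q (My * Q s) s := hasDerivAt_exp_smul_const' My s
    have h := (hP.mul hQ).mul hP
    refine h.congr_deriv ?_
    simp only [hErrdef, hFdef, hMdef, Pi.mul_apply]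
    simp only [smul_mul_assoc, mul_smul_comm, add_mul, mul_add, sub_mul, mul_sub, smul_sub,
      mul_assoc, e1]
    rw [show P s * Mx = Mx * P s from (hpx s).symm]
    module
  -- FTC
  have hΦ0 : P 0 * Q 0 * P 0 = 1 := by
    simp [hPdef, hQdef, zero_div, exp_zero]
  have key : ∀ τ : ℝ, 0 ≤ τ →
      M⁻¹ * (P τ * Q τ * P τ - 1) =
        (∫ s in (0:ℝ)..τ, F s) + ∫ s in (0:ℝ)..τ, M⁻¹ * Err s := by
    intro τ hτ
    have hDint := ((continuous_const.mul hFcont).add hErrcont).intervalIntegrable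
      (u := fun s => M * F s + Err s) (μ := volume) 0 τ
    have hFTC : (∫ s in (0:ℝ)..τ, (M * F s + Err s)) =
        P τ * Q τ * P τ - P 0 * Q 0 * P 0 :=
      integral_eq_sub_of_hasDerivAt (fun s _ => hD s) hDint
    have hcomm := ContinuousLinearMap.intervalIntegral_comp_comm
      (ContinuousLinearMap.mul ℝ (Matrix (Fin n) (Fin n) ℝ) M⁻¹) hDint
    simp only [ContinuousLinearMap.mul_apply'] at hcomm
    have : M⁻¹ * (P τ * Q τ * P τ - 1) =
        ∫ s in (0:ℝ)..τ, M⁻¹ * (M * F s + Err s) := by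
      rw [hcomm, hFTC, hΦ0]
    rw [this]
    have hsimp : ∀ s : ℝ, M⁻¹ * (M * F s + Err s) = F s + M⁻¹ * Err s := by
      intro s
      rw [mul_add, ← mul_assoc, Matrix.nonsing_inv_mul _ hMunit, one_mul]
    simp only [hsimp]
    exact integral_add (hFcont.intervalIntegrable _ _)
      ((continuous_const.mul hErrcont).intervalIntegrable _ _)
  -- bound on the error term
  have hErrBound : ∀ s : ℝ, 0 ≤ s → ‖Err s‖ ≤ s * ‖Mx * My - My * Mx‖ := by
    intro s hs
    have hs2 : (0:ℝ) ≤ s / 2 := by linarith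
    have hpn : ‖P s‖ ≤ 1 := hcx (s / 2) hs2
    have hqn : ‖Q s‖ ≤ 1 := hcy s hs
    have heq : F s * Mx - Mx * F s = P s * ((Q s * Mx - Mx * Q s) * P s) := by
      simp only [hFdef, mul_sub, sub_mul, mul_assoc]
      rw [← hpx s, e1]
    have hcomm1 : ‖Q s * Mx - Mx * Q s‖ ≤ s * ‖Mx * My - My * Mx‖ := by
      have h := comm_bound hcy Mx hs
      rw [norm_sub_rev (My * Mx)] at h
      simpa [hQdef] using h
    have hcomm2 : ‖P s * My - My * P s‖ ≤ s / 2 * ‖Mx * My - My * Mx‖ := by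
      have h := comm_bound hcx My hs2
      simpa [hPdef] using h
    have h1 : ‖((1:ℝ)/2) • (F s * Mx - Mx * F s)‖ ≤ 1 / 2 * (s * ‖Mx * My - My * Mx‖) := by
      rw [norm_smul, Real.norm_eq_abs, show |(1:ℝ)/2| = 1/2 by norm_num, heq]
      have hx : ‖P s * ((Q s * Mx - Mx * Q s) * P s)‖ ≤ s * ‖Mx * My - My * Mx‖ := by
        calc ‖P s * ((Q s * Mx - Mx * Q s) * P s)‖
            ≤ ‖P s‖ * (‖Q s * Mx - Mx * Q s‖ * ‖P s‖) :=
              le_trans (norm_mul_le _ _)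
                (mul_le_mul_of_nonneg_left (norm_mul_le _ _) (norm_nonneg _))
          _ ≤ 1 * (‖Q s * Mx - Mx * Q s‖ * 1) :=
              mul_le_mul hpn (mul_le_mul_of_nonneg_left hpn (norm_nonneg _))
                (by positivity) zero_le_one
          _ = ‖Q s * Mx - Mx * Q s‖ := by ring
          _ ≤ s * ‖Mx * My - My * Mx‖ := hcomm1
      linarith
    have hqp : ‖Q s * P s‖ ≤ 1 :=
      calc ‖Q s * P s‖ ≤ ‖Q s‖ * ‖P s‖ := norm_mul_le _ _
        _ ≤ 1 * 1 := mul_le_mul hqn hpn (norm_nonneg _) zero_le_one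
        _ = 1 := by ring
    have h2 : ‖(P s * My - My * P s) * (Q s * P s)‖ ≤ s / 2 * ‖Mx * My - My * Mx‖ :=
      calc ‖(P s * My - My * P s) * (Q s * P s)‖
          ≤ ‖P s * My - My * P s‖ * ‖Q s * P s‖ := norm_mul_le _ _
        _ ≤ (s / 2 * ‖Mx * My - My * Mx‖) * 1 :=
            mul_le_mul hcomm2 hqp (norm_nonneg _) (by positivity)
        _ = s / 2 * ‖Mx * My - My * Mx‖ := by ring
    calc ‖Err s‖ ≤ ‖((1:ℝ)/2) • (F s * Mx - Mx * F s)‖ +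
          ‖(P s * My - My * P s) * (Q s * P s)‖ := norm_add_le _ _
      _ ≤ 1 / 2 * (s * ‖Mx * My - My * Mx‖) + s / 2 * ‖Mx * My - My * Mx‖ :=
          add_le_add h1 h2
      _ = s * ‖Mx * My - My * Mx‖ := by ring
  -- bound on R
  have hc0 : (0:ℝ) ≤ ‖Mx * My - My * Mx‖ := norm_nonneg _
  have hRbound : ∀ τ : ℝ, 0 ≤ τ →
      ‖M⁻¹ * (P τ * Q τ * P τ - 1) - ∫ s in (0:ℝ)..τ, F s‖ ≤
        C * τ ^ 2 / 2 * ‖Mx * My - My * Mx‖ := by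
    intro τ hτ
    have hrw : M⁻¹ * (P τ * Q τ * P τ - 1) - (∫ s in (0:ℝ)..τ, F s) =
        ∫ s in (0:ℝ)..τ, M⁻¹ * Err s := by
      rw [key τ hτ, add_sub_cancel_left]
    rw [hrw]
    have hgint : IntervalIntegrable (fun s : ℝ => C * ‖Mx * My - My * Mx‖ * s)
        volume 0 τ := (continuous_const.mul continuous_id).intervalIntegrable _ _
    have hae : ∀ᵐ t ∂volume.restrict (Set.uIoc (0:ℝ) τ),
        ‖M⁻¹ * Err t‖ ≤ C * ‖Mx * My - My * Mx‖ * t := by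
      refine (ae_restrict_iff' measurableSet_uIoc).mpr (Filter.Eventually.of_forall
        fun t ht => ?_)
      rw [Set.uIoc_of_le hτ] at ht
      calc ‖M⁻¹ * Err t‖ ≤ ‖M⁻¹‖ * ‖Err t‖ := norm_mul_le _ _
        _ ≤ C * (t * ‖Mx * My - My * Mx‖) :=
            mul_le_mul hC (hErrBound t ht.1.le) (norm_nonneg _) hC0
        _ = C * ‖Mx * My - My * Mx‖ * t := by ring
    have hb := intervalIntegral.norm_integral_le_abs_of_norm_le hae hgint
    have hg : (∫ s in (0:ℝ)..τ, C * ‖Mx * My - My * Mx‖ * s) =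
        C * ‖Mx * My - My * Mx‖ * (τ ^ 2 / 2) := by
      rw [intervalIntegral.integral_const_mul, integral_id]
      ring
    rw [hg, abs_of_nonneg (mul_nonneg (mul_nonneg hC0 hc0) (by positivity))] at hb
    calc ‖∫ s in (0:ℝ)..τ, M⁻¹ * Err s‖
        ≤ C * ‖Mx * My - My * Mx‖ * (τ ^ 2 / 2) := hb
      _ = C * τ ^ 2 / 2 * ‖Mx * My - My * Mx‖ := by ring
  -- nonnegativity of the integral term
  have hmulnn : ∀ X Y : Matrix (Fin n) (Fin n) ℝ, (∀ i j, 0 ≤ X i j) →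
      (∀ i j, 0 ≤ Y i j) → ∀ i j, 0 ≤ (X * Y) i j := by
    intro X Y hX hY i j
    rw [Matrix.mul_apply]
    exact Finset.sum_nonneg fun l _ => mul_nonneg (hX i l) (hY l j)
  have hFnn : ∀ s : ℝ, 0 ≤ s → ∀ i j, 0 ≤ F s i j := by
    intro s hs i j
    have hs2 : (0:ℝ) ≤ s / 2 := by linarith
    exact hmulnn _ _ (hmulnn _ _ (exp_metzler_nonneg hMx hs2)
      (exp_metzler_nonneg hMy hs)) (exp_metzler_nonneg hMx hs2) i j
  have hint_nonneg : ∀ τ : ℝ, 0 ≤ τ → ∀ i j, 0 ≤ (∫ s in (0:ℝ)..τ, F s) i j := by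
    intro τ hτ i j
    have hFint := hFcont.intervalIntegrable (μ := volume) 0 τ
    have hcc := ContinuousLinearMap.intervalIntegral_comp_comm (entryCLM i j) hFint
    rw [show (∫ s in (0:ℝ)..τ, F s) i j
        = ∫ s in (0:ℝ)..τ, entryCLM i j (F s) from hcc.symm]
    refine intervalIntegral.integral_nonneg hτ fun u hu => ?_
    simpa using hFnn u hu.1 i j
  refine ⟨⟨fun τ => M⁻¹ * (P τ * Q τ * P τ - 1) - ∫ s in (0:ℝ)..τ, F s,
    fun τ hτ => ⟨by simp only [hFdef]; abel, hint_nonneg τ hτ, hRbound τ hτ⟩⟩, ?_⟩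
  intro hcomm0 τ hτ i j
  have hb := hRbound τ hτ
  rw [hcomm0, norm_zero, mul_zero] at hb
  have hz := norm_le_zero_iff.mp hb
  rw [sub_eq_zero] at hz
  rw [hz]
  exact hint_nonneg τ hτ i j
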